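/- Let F be a field. If a direct sum of tuples P_1 ⊕ ⋯ ⊕ P_k of matrices over F, each P_i indecomposable with respect to equivalence, is equivalent to a direct sum Q_1 ⊕ ⋯ ⊕ Q_l of tuples each indecomposable with respect to equivalence, then k = l and there is a permutation σ of {1,…,k} such that P_i is equivalent to Q_{σ(i)} for every i (in particular P_i and Q_{σ(i)} have the same size). -/

import Mathlib

open Matrix

set_option linter.unusedSectionVars false
set_option linter.unnecessarySeqFocus false
set_option linter.unusedTactic false
set_option maxHeartbeats 1600000
set_option synthInstance.maxHeartbeats 400000

/-- Tuples `A` and `B` of matrices (over possibly different index types of the same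
size) are *equivalent* if there are invertible matrices `R`, `S` with `R * Aᵢ * S = Bᵢ`
for all `i`. Invertibility of the (a priori rectangular) matrices `R`, `S` is expressed
by the existence of two-sided inverses. -/
def TuplesEquiv {F : Type*} [Field F] {t : ℕ} {p q p' q' : Type*}
    [Fintype p] [Fintype q] [Fintype p'] [Fintype q'] [DecidableEq p] [DecidableEq q] [DecidableEq p'] [DecidableEq q']
    (A : Fin t → Matrix p q F) (B : Fin t → Matrix p' q' F) : Prop :=
  ∃ (R : Matrix p' p F) (R' : Matrix p p' F) (S : Matrix q q' F) (S' : Matrix q' q F),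
    R * R' = 1 ∧ R' * R = 1 ∧ S * S' = 1 ∧ S' * S = 1 ∧ ∀ i, R * A i * S = B i

/-- A tuple of `m × n` matrices with `m + n > 0` is *indecomposable with respect to
equivalence* if it is not equivalent to a direct sum of two tuples each of whose sizes
`m' × n'` satisfies `m' + n' > 0`. -/
def TupleIndecomposable {F : Type*} [Field F] {t : ℕ} {p q : Type*}
    [Fintype p] [Fintype q] [DecidableEq p] [DecidableEq q] (A : Fin t → Matrix p q F) : Prop :=
  0 < Fintype.card p + Fintype.card q ∧
  ¬ ∃ (m₁ n₁ m₂ n₂ : ℕ) (B : Fin t → Matrix (Fin m₁) (Fin n₁) F)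
      (C : Fin t → Matrix (Fin m₂) (Fin n₂) F),
      0 < m₁ + n₁ ∧ 0 < m₂ + n₂ ∧
      TuplesEquiv A (fun i => Matrix.fromBlocks (B i) 0 0 (C i))

section RingLemmas

variable {F : Type*} [Field F]

theorem ks_nilpotent_or_unit {R : Type*} [Ring R] [Algebra F R] [FiniteDimensional F R]
    (hid : ∀ e : R, e * e = e → e = 0 ∨ e = 1) (x : R) : IsNilpotent x ∨ IsUnit x := by
  rcases subsingleton_or_nontrivial R with hR | hR
  · exact Or.inl ⟨1, Subsingleton.elim _ _⟩
  have hint : IsIntegral F x := IsIntegral.of_finite F x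
  have hm0 : minpoly F x ≠ 0 := minpoly.ne_zero hint
  have hmx : Polynomial.aeval x (minpoly F x) = 0 := minpoly.aeval F x
  set m := minpoly F x with hm
  have haevmul : ∀ p q : Polynomial F,
      Polynomial.aeval x (p * q) = Polynomial.aeval x p * Polynomial.aeval x q := fun p q => by
    rw [_root_.map_mul]
  have haevX : ∀ p : Polynomial F, Polynomial.aeval x (p * Polynomial.X) =
      Polynomial.aeval x p * x := fun p => by rw [haevmul, Polynomial.aeval_X]
  have haevX' : ∀ p : Polynomial F, Polynomial.aeval x (p * Polynomial.X) =
      x * Polynomial.aeval x p := fun p => by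
    rw [show p * Polynomial.X = Polynomial.X * p by ring, haevmul, Polynomial.aeval_X]
  set k := m.rootMultiplicity 0 with hk
  set g := m /ₘ (Polynomial.X - Polynomial.C 0) ^ k with hgdef
  have hfac : (Polynomial.X - Polynomial.C 0) ^ k * g = m :=
    Polynomial.pow_mul_divByMonic_rootMultiplicity_eq m 0
  have hg0 : g.eval 0 ≠ 0 := Polynomial.eval_divByMonic_pow_rootMultiplicity_ne_zero 0 hm0
  rw [Polynomial.C_0, sub_zero] at hfac
  rcases Nat.eq_zero_or_pos k with hk0 | hkpos
  · -- x is a unit, since m has nonzero constant coefficient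
    right
    have hc0 : m.coeff 0 ≠ 0 := by
      rw [Polynomial.coeff_zero_eq_eval_zero]
      intro hroot
      have := (Polynomial.rootMultiplicity_pos hm0).2 hroot
      omega
    have hXm : IsCoprime (Polynomial.X : Polynomial F) m := by
      refine (Polynomial.prime_X).coprime_iff_not_dvd.2 ?_
      rw [Polynomial.X_dvd_iff]
      exact hc0
    obtain ⟨a, b, hab⟩ := hXm
    have h1 : Polynomial.aeval x a * x = 1 := by
      have h' := congrArg (Polynomial.aeval x) hab
      rw [_root_.map_add, _root_.map_one, haevX a, haevmul b m, hmx, mul_zero, add_zero] at h'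
      exact h'
    have h2 : x * Polynomial.aeval x a = 1 := by
      have h' := congrArg (Polynomial.aeval x) hab
      rw [_root_.map_add, _root_.map_one, haevX' a, haevmul b m, hmx, mul_zero, add_zero] at h'
      exact h'
    exact isUnit_iff_exists.2 ⟨_, h2, h1⟩
  · have hXg : IsCoprime (Polynomial.X : Polynomial F) g := by
      refine (Polynomial.prime_X).coprime_iff_not_dvd.2 ?_
      rw [Polynomial.X_dvd_iff, Polynomial.coeff_zero_eq_eval_zero]
      exact hg0
    obtain ⟨a, b, hab⟩ := (IsCoprime.pow_left hXg : IsCoprime (Polynomial.X ^ k) g)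
    set y := Polynomial.aeval x (a * Polynomial.X ^ k) with hy
    set z := Polynomial.aeval x (b * g) with hz
    have hyz : y + z = 1 := by rw [hy, hz, ← _root_.map_add, hab, _root_.map_one]
    have hyz0 : y * z = 0 := by
      rw [hy, hz, ← _root_.map_mul,
        show a * Polynomial.X ^ k * (b * g) = a * b * (Polynomial.X ^ k * g) by ring, hfac,
        _root_.map_mul, hmx, mul_zero]
    have hyy : y * y = y := by
      have h' := congrArg (y * ·) hyz
      simpa [mul_add, hyz0] using h'
    rcases hid y hyy with h0 | h1
    · left
      have hz1 : z = 1 := by rwa [h0, zero_add] at hyz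
      refine ⟨k, ?_⟩
      calc (x : R) ^ k = Polynomial.aeval x (Polynomial.X ^ k) * z := by
            rw [hz1, mul_one, Polynomial.aeval_X_pow]
        _ = Polynomial.aeval x (Polynomial.X ^ k * (b * g)) := (haevmul _ _).symm
        _ = Polynomial.aeval x (b * m) := by
            rw [show Polynomial.X ^ k * (b * g) = b * (Polynomial.X ^ k * g) by ring, hfac]
        _ = 0 := by rw [_root_.map_mul, hmx, mul_zero]
    · right
      obtain ⟨k', hk'⟩ : ∃ k', k = k' + 1 := ⟨k - 1, by omega⟩
      set d := Polynomial.aeval x (a * Polynomial.X ^ k') with hd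
      have hdx : d * x = 1 := by
        rw [hd, ← haevX,
          show a * Polynomial.X ^ k' * Polynomial.X = a * Polynomial.X ^ k by rw [hk']; ring,
          ← hy, h1]
      have hxd : x * d = 1 := by
        rw [hd, ← haevX',
          show a * Polynomial.X ^ k' * Polynomial.X = a * Polynomial.X ^ k by rw [hk']; ring,
          ← hy, h1]
      exact isUnit_iff_exists.2 ⟨d, hxd, hdx⟩

theorem ks_nonunits_add {R : Type*} [Ring R] [Algebra F R] [FiniteDimensional F R]
    (hid : ∀ e : R, e * e = e → e = 0 ∨ e = 1) (a b : R)
    (ha : ¬IsUnit a) (hb : ¬IsUnit b) : ¬IsUnit (a + b) := by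
  intro hab
  obtain ⟨u, hu⟩ := hab
  have h1 : (↑u⁻¹ : R) * a + ↑u⁻¹ * b = 1 := by rw [← mul_add, ← hu, Units.inv_mul]
  have ha' : ¬IsUnit ((↑u⁻¹ : R) * a) := fun h => ha (by
    have : a = ↑u * ((↑u⁻¹ : R) * a) := by rw [← mul_assoc, Units.mul_inv, one_mul]
    rw [this]; exact u.isUnit.mul h)
  have hb' : ¬IsUnit ((↑u⁻¹ : R) * b) := fun h => hb (by
    have : b = ↑u * ((↑u⁻¹ : R) * b) := by rw [← mul_assoc, Units.mul_inv, one_mul]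
    rw [this]; exact u.isUnit.mul h)
  rcases ks_nilpotent_or_unit (F := F) hid ((↑u⁻¹ : R) * a) with hnil | hun
  · exact hb' (by
      have h2 : (↑u⁻¹ : R) * b = 1 - ↑u⁻¹ * a := by rw [← h1]; abel
      rw [h2]; exact hnil.isUnit_one_sub)
  · exact ha' hun

theorem ks_exists_unit_of_sum {R : Type*} [Ring R] [Nontrivial R]
    (hadd : ∀ a b : R, ¬IsUnit a → ¬IsUnit b → ¬IsUnit (a + b)) {ι : Type*}
    (s : Finset ι) (f : ι → R) (h : ∑ i ∈ s, f i = 1) : ∃ i ∈ s, IsUnit (f i) := by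
  by_contra hc
  push_neg at hc
  have hsum : ¬IsUnit (∑ i ∈ s, f i) := by
    refine Finset.sum_induction f (fun r => ¬IsUnit r) hadd not_isUnit_zero
      (fun i hi => hc i hi)
  rw [h] at hsum
  exact hsum isUnit_one

end RingLemmas

section TupleBasics

variable {F : Type*} [Field F] {t : ℕ}
variable {p q r s p' q' : Type*} [Fintype p] [Fintype q] [Fintype r] [Fintype s]
  [Fintype p'] [Fintype q']
  [DecidableEq p] [DecidableEq q] [DecidableEq r] [DecidableEq s] [DecidableEq p'] [DecidableEq q']

theorem TuplesEquiv.symm {A : Fin t → Matrix p q F} {B : Fin t → Matrix r s F}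
    (h : TuplesEquiv A B) : TuplesEquiv B A := by
  obtain ⟨R, R', S, S', h1, h2, h3, h4, h5⟩ := h
  refine ⟨R', R, S', S, h2, h1, h4, h3, fun i => ?_⟩
  rw [← h5 i]
  simp only [Matrix.mul_assoc, h3, Matrix.mul_one]
  rw [← Matrix.mul_assoc, h2, Matrix.one_mul]

theorem TuplesEquiv.trans {A : Fin t → Matrix p q F} {B : Fin t → Matrix r s F}
    {C : Fin t → Matrix p' q' F} (hab : TuplesEquiv A B) (hbc : TuplesEquiv B C) :
    TuplesEquiv A C := by
  obtain ⟨R, R', S, S', h1, h2, h3, h4, h5⟩ := hab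
  obtain ⟨T, T', U, U', g1, g2, g3, g4, g5⟩ := hbc
  refine ⟨T * R, R' * T', S * U, U' * S', ?_, ?_, ?_, ?_, fun i => ?_⟩
  · rw [Matrix.mul_assoc, ← Matrix.mul_assoc R, h1, Matrix.one_mul, g1]
  · rw [Matrix.mul_assoc, ← Matrix.mul_assoc T', g2, Matrix.one_mul, h2]
  · rw [Matrix.mul_assoc, ← Matrix.mul_assoc U, g3, Matrix.one_mul, h3]
  · rw [Matrix.mul_assoc, ← Matrix.mul_assoc S', h4, Matrix.one_mul, g4]
  · rw [← g5 i, ← h5 i]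
    simp only [Matrix.mul_assoc]

/-- Reindexing a tuple along equivalences yields an equivalent tuple. -/
theorem TuplesEquiv.reindex (A : Fin t → Matrix p q F) (er : r ≃ p) (ec : s ≃ q) :
    TuplesEquiv A (fun i => (A i).submatrix er ec) := by
  refine ⟨(1 : Matrix p p F).submatrix ⇑er ⇑(Equiv.refl p),
    (1 : Matrix p p F).submatrix ⇑(Equiv.refl p) ⇑er,
    (1 : Matrix q q F).submatrix ⇑(Equiv.refl q) ⇑ec,
    (1 : Matrix q q F).submatrix ⇑ec ⇑(Equiv.refl q), ?_, ?_, ?_, ?_, fun i => ?_⟩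
  · rw [Matrix.submatrix_mul_equiv (1 : Matrix p p F) (1 : Matrix p p F) ⇑er (Equiv.refl p) ⇑er,
      Matrix.one_mul, Matrix.submatrix_one_equiv]
  · rw [Matrix.submatrix_mul_equiv (1 : Matrix p p F) (1 : Matrix p p F) ⇑(Equiv.refl p) er
      ⇑(Equiv.refl p), Matrix.one_mul, Matrix.submatrix_one_equiv]
  · rw [Matrix.submatrix_mul_equiv (1 : Matrix q q F) (1 : Matrix q q F) ⇑(Equiv.refl q) ec
      ⇑(Equiv.refl q), Matrix.one_mul, Matrix.submatrix_one_equiv]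
  · rw [Matrix.submatrix_mul_equiv (1 : Matrix q q F) (1 : Matrix q q F) ⇑ec (Equiv.refl q) ⇑ec,
      Matrix.one_mul, Matrix.submatrix_one_equiv]
  · rw [Matrix.one_submatrix_mul, Matrix.mul_submatrix_one]
    simp [Matrix.submatrix_submatrix]

/-- The endomorphism algebra of a tuple of matrices. -/
def tupleEnd (A : Fin t → Matrix p q F) : Subalgebra F (Matrix p p F × Matrix q q F) where
  carrier := {T | ∀ i, T.1 * A i = A i * T.2}
  mul_mem' := by
    intro a b ha hb i
    show a.1 * b.1 * A i = A i * (a.2 * b.2)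
    rw [Matrix.mul_assoc, hb i, ← Matrix.mul_assoc, ha i, Matrix.mul_assoc]
  one_mem' := by
    intro i
    show (1 : Matrix p p F) * A i = A i * 1
    rw [Matrix.one_mul, Matrix.mul_one]
  add_mem' := by
    intro a b ha hb i
    show (a.1 + b.1) * A i = A i * (a.2 + b.2)
    rw [Matrix.add_mul, ha i, hb i, Matrix.mul_add]
  algebraMap_mem' := by
    intro c i
    show (algebraMap F (Matrix p p F) c) * A i = A i * (algebraMap F (Matrix q q F) c)
    rw [Algebra.algebraMap_eq_smul_one, Algebra.algebraMap_eq_smul_one,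
      Matrix.smul_mul, Matrix.mul_smul, Matrix.one_mul, Matrix.mul_one]

theorem tupleEnd_mem {A : Fin t → Matrix p q F} {T : Matrix p p F × Matrix q q F} :
    T ∈ tupleEnd A ↔ ∀ i, T.1 * A i = A i * T.2 := Iff.rfl

theorem ks_matrix_one_ne_zero [Nonempty p] : (1 : Matrix p p F) ≠ 0 := by
  intro h
  obtain ⟨x⟩ := ‹Nonempty p›
  have := congrFun (congrFun h x) x
  simp at this

theorem tupleEnd_nontrivial (A : Fin t → Matrix p q F)
    (hcard : 0 < Fintype.card p + Fintype.card q) : Nontrivial ↥(tupleEnd A) := by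
  refine ⟨0, 1, fun h => ?_⟩
  have h' := congrArg Subtype.val h
  rw [Prod.ext_iff] at h'
  rcases Nat.lt_or_ge 0 (Fintype.card p) with hp | hp
  · haveI : Nonempty p := Fintype.card_pos_iff.1 hp
    exact ks_matrix_one_ne_zero (F := F) (p := p) h'.1.symm
  · have hq : 0 < Fintype.card q := by omega
    haveI : Nonempty q := Fintype.card_pos_iff.1 hq
    exact ks_matrix_one_ne_zero (F := F) (p := q) h'.2.symm

/-- Auxiliary: toMatrix with the standard bases recovers the matrix. -/
theorem ks_toMatrix_basisFun (M : Matrix p q F) :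
    LinearMap.toMatrix (Pi.basisFun F q) (Pi.basisFun F p) (Matrix.toLin' M) = M := by
  ext i j
  rw [LinearMap.toMatrix_apply]
  simp [Matrix.toLin'_apply, Matrix.mulVec_single, Pi.basisFun_apply, Pi.basisFun_repr]

/-- The key structural lemma: an idempotent endomorphism of an indecomposable tuple is
trivial. -/
theorem ks_idem_trivial (A : Fin t → Matrix p q F) (hA : TupleIndecomposable A)
    (R : Matrix p p F) (S : Matrix q q F) (hcomm : ∀ i, R * A i = A i * S)
    (hR : R * R = R) (hS : S * S = S) : (R = 0 ∧ S = 0) ∨ (R = 1 ∧ S = 1) := by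
  by_contra hcon
  rw [not_or] at hcon
  obtain ⟨hc0, hc1⟩ := hcon
  apply hA.2
  set eV := Matrix.toLin' R with heV
  set eW := Matrix.toLin' S with heW
  have heVid : eV ∘ₗ eV = eV := by rw [heV, ← Matrix.toLin'_mul, hR]
  have heWid : eW ∘ₗ eW = eW := by rw [heW, ← Matrix.toLin'_mul, hS]
  obtain ⟨V₁, hV₁⟩ := (LinearMap.isProj_iff_isIdempotentElem eV).2 heVid
  obtain ⟨W₁, hW₁⟩ := (LinearMap.isProj_iff_isIdempotentElem eW).2 heWid
  have hcV : IsCompl V₁ (LinearMap.ker eV) := hV₁.isCompl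
  have hcW : IsCompl W₁ (LinearMap.ker eW) := hW₁.isCompl
  set r₁ := Module.finrank F V₁
  set r₂ := Module.finrank F (LinearMap.ker eV)
  set s₁ := Module.finrank F W₁
  set s₂ := Module.finrank F (LinearMap.ker eW)
  set bV : Module.Basis (Fin r₁ ⊕ Fin r₂) F (p → F) :=
    ((Module.finBasis F V₁).prod (Module.finBasis F (LinearMap.ker eV))).map
      (Submodule.prodEquivOfIsCompl _ _ hcV) with hbV
  set cW : Module.Basis (Fin s₁ ⊕ Fin s₂) F (q → F) :=
    ((Module.finBasis F W₁).prod (Module.finBasis F (LinearMap.ker eW))).map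
      (Submodule.prodEquivOfIsCompl _ _ hcW) with hcW'
  have hbVl : ∀ j, bV (Sum.inl j) = ((Module.finBasis F V₁) j : p → F) := by
    intro j
    simp [hbV, Module.Basis.prod_apply, Submodule.coe_prodEquivOfIsCompl]
  have hbVr : ∀ j, bV (Sum.inr j) = ((Module.finBasis F (LinearMap.ker eV)) j : p → F) := by
    intro j
    simp [hbV, Module.Basis.prod_apply, Submodule.coe_prodEquivOfIsCompl]
  have hcWl : ∀ j, cW (Sum.inl j) = ((Module.finBasis F W₁) j : q → F) := by
    intro j
    simp [hcW', Module.Basis.prod_apply, Submodule.coe_prodEquivOfIsCompl]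
  have hcWr : ∀ j, cW (Sum.inr j) = ((Module.finBasis F (LinearMap.ker eW)) j : q → F) := by
    intro j
    simp [hcW', Module.Basis.prod_apply, Submodule.coe_prodEquivOfIsCompl]
  -- the matrix of eV in basis bV
  have hmatV : LinearMap.toMatrix bV bV eV = Matrix.fromBlocks 1 0 0 0 := by
    ext x y
    rw [LinearMap.toMatrix_apply]
    cases y with
    | inl j =>
        rw [hbVl j, hV₁.map_id _ (Submodule.coe_mem _), ← hbVl j, Module.Basis.repr_self]
        cases x with
        | inl i => simp [Matrix.one_apply, Finsupp.single_apply, eq_comm]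
        | inr i => simp [Finsupp.single_apply]
    | inr j =>
        have : eV ((Module.finBasis F (LinearMap.ker eV)) j : p → F) = 0 :=
          (LinearMap.mem_ker).1 (Submodule.coe_mem _)
        rw [hbVr j, this]
        cases x with
        | inl i => simp
        | inr i => simp
  have hmatW : LinearMap.toMatrix cW cW eW = Matrix.fromBlocks 1 0 0 0 := by
    ext x y
    rw [LinearMap.toMatrix_apply]
    cases y with
    | inl j =>
        rw [hcWl j, hW₁.map_id _ (Submodule.coe_mem _), ← hcWl j, Module.Basis.repr_self]
        cases x with
        | inl i => simp [Matrix.one_apply, Finsupp.single_apply, eq_comm]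
        | inr i => simp [Finsupp.single_apply]
    | inr j =>
        have : eW ((Module.finBasis F (LinearMap.ker eW)) j : q → F) = 0 :=
          (LinearMap.mem_ker).1 (Submodule.coe_mem _)
        rw [hcWr j, this]
        cases x with
        | inl i => simp
        | inr i => simp
  set A' : Fin t → Matrix (Fin r₁ ⊕ Fin r₂) (Fin s₁ ⊕ Fin s₂) F :=
    fun i => LinearMap.toMatrix cW bV (Matrix.toLin' (A i)) with hA'
  have hcommM : ∀ i, (Matrix.fromBlocks 1 0 0 0 : Matrix (Fin r₁ ⊕ Fin r₂) (Fin r₁ ⊕ Fin r₂) F) * A' i = A' i * (Matrix.fromBlocks 1 0 0 0 : Matrix (Fin s₁ ⊕ Fin s₂) (Fin s₁ ⊕ Fin s₂) F) := by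
    intro i
    have hcomp : eV ∘ₗ Matrix.toLin' (A i) = Matrix.toLin' (A i) ∘ₗ eW := by
      rw [heV, heW, ← Matrix.toLin'_mul, ← Matrix.toLin'_mul, hcomm i]
    calc (Matrix.fromBlocks 1 0 0 0 : Matrix (Fin r₁ ⊕ Fin r₂) (Fin r₁ ⊕ Fin r₂) F) * A' i
        = LinearMap.toMatrix bV bV eV * LinearMap.toMatrix cW bV (Matrix.toLin' (A i)) := by
          rw [hmatV]
      _ = LinearMap.toMatrix cW bV (eV ∘ₗ Matrix.toLin' (A i)) :=
          (LinearMap.toMatrix_comp cW bV bV eV (Matrix.toLin' (A i))).symm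
      _ = LinearMap.toMatrix cW bV (Matrix.toLin' (A i) ∘ₗ eW) := by rw [hcomp]
      _ = LinearMap.toMatrix cW bV (Matrix.toLin' (A i)) * LinearMap.toMatrix cW cW eW :=
          LinearMap.toMatrix_comp cW cW bV (Matrix.toLin' (A i)) eW
      _ = A' i * (Matrix.fromBlocks 1 0 0 0 : Matrix (Fin s₁ ⊕ Fin s₂) (Fin s₁ ⊕ Fin s₂) F) := by rw [hmatW, hA']
  have h12 : ∀ i, (A' i).toBlocks₁₂ = 0 := by
    intro i
    have h' := hcommM i
    rw [← Matrix.fromBlocks_toBlocks (A' i), Matrix.fromBlocks_multiply,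
      Matrix.fromBlocks_multiply] at h'
    have h'' := congrArg Matrix.toBlocks₁₂ h'
    simpa using h''
  have h21 : ∀ i, (A' i).toBlocks₂₁ = 0 := by
    intro i
    have h' := hcommM i
    rw [← Matrix.fromBlocks_toBlocks (A' i), Matrix.fromBlocks_multiply,
      Matrix.fromBlocks_multiply] at h'
    have h'' := congrArg Matrix.toBlocks₂₁ h'
    simpa using h''.symm
  have hA'eq : ∀ i, Matrix.fromBlocks ((A' i).toBlocks₁₁) 0 0 ((A' i).toBlocks₂₂) = A' i := by
    intro i
    conv_rhs => rw [← Matrix.fromBlocks_toBlocks (A' i)]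
    rw [h12 i, h21 i]
  -- the equivalence A ~ A'
  have hequiv : TuplesEquiv A A' := by
    refine ⟨LinearMap.toMatrix (Pi.basisFun F p) bV LinearMap.id,
      LinearMap.toMatrix bV (Pi.basisFun F p) LinearMap.id,
      LinearMap.toMatrix cW (Pi.basisFun F q) LinearMap.id,
      LinearMap.toMatrix (Pi.basisFun F q) cW LinearMap.id, ?_, ?_, ?_, ?_, fun i => ?_⟩
    · rw [← LinearMap.toMatrix_comp bV (Pi.basisFun F p) bV, LinearMap.id_comp,
        LinearMap.toMatrix_id]
    · rw [← LinearMap.toMatrix_comp (Pi.basisFun F p) bV (Pi.basisFun F p), LinearMap.id_comp,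
        LinearMap.toMatrix_id]
    · rw [← LinearMap.toMatrix_comp (Pi.basisFun F q) cW (Pi.basisFun F q), LinearMap.id_comp,
        LinearMap.toMatrix_id]
    · rw [← LinearMap.toMatrix_comp cW (Pi.basisFun F q) cW, LinearMap.id_comp,
        LinearMap.toMatrix_id]
    · rw [hA', ← ks_toMatrix_basisFun (A i),
        ← LinearMap.toMatrix_comp (Pi.basisFun F q) (Pi.basisFun F p) bV,
        ← LinearMap.toMatrix_comp cW (Pi.basisFun F q) bV, LinearMap.id_comp,
        LinearMap.comp_id]
  refine ⟨r₁, s₁, r₂, s₂, fun i => (A' i).toBlocks₁₁, fun i => (A' i).toBlocks₂₂, ?_, ?_, ?_⟩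
  · -- 0 < r₁ + s₁, else R = 0 and S = 0
    by_contra hz
    push_neg at hz
    have hr1 : r₁ = 0 := by omega
    have hs1 : s₁ = 0 := by omega
    apply hc0
    have hV0 : V₁ = ⊥ := Submodule.finrank_eq_zero.1 hr1
    have hW0 : W₁ = ⊥ := Submodule.finrank_eq_zero.1 hs1
    have heV0 : eV = 0 := by
      apply LinearMap.ext; intro x
      have := hV₁.map_mem x
      rw [hV0, Submodule.mem_bot] at this
      simpa using this
    have heW0 : eW = 0 := by
      apply LinearMap.ext; intro x
      have := hW₁.map_mem x
      rw [hW0, Submodule.mem_bot] at this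
      simpa using this
    constructor
    · have : Matrix.toLin' R = Matrix.toLin' (0 : Matrix p p F) := by
        rw [← heV, heV0, map_zero]
      exact Matrix.toLin'.injective this
    · have : Matrix.toLin' S = Matrix.toLin' (0 : Matrix q q F) := by
        rw [← heW, heW0, map_zero]
      exact Matrix.toLin'.injective this
  · -- 0 < r₂ + s₂, else R = 1 and S = 1
    by_contra hz
    push_neg at hz
    have hr2 : r₂ = 0 := by omega
    have hs2 : s₂ = 0 := by omega
    apply hc1
    have hV0 : LinearMap.ker eV = ⊥ := Submodule.finrank_eq_zero.1 hr2
    have hW0 : LinearMap.ker eW = ⊥ := Submodule.finrank_eq_zero.1 hs2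
    have heV1 : eV = LinearMap.id := by
      apply LinearMap.ext; intro x
      have hmem : eV (eV x - x) = 0 := by
        have := congrArg (fun f => f x) heVid
        simp only [LinearMap.comp_apply] at this
        simp [map_sub, this]
      have : eV x - x ∈ LinearMap.ker eV := LinearMap.mem_ker.2 hmem
      rw [hV0, Submodule.mem_bot, sub_eq_zero] at this
      simpa using this
    have heW1 : eW = LinearMap.id := by
      apply LinearMap.ext; intro x
      have hmem : eW (eW x - x) = 0 := by
        have := congrArg (fun f => f x) heWid
        simp only [LinearMap.comp_apply] at this
        simp [map_sub, this]
      have : eW x - x ∈ LinearMap.ker eW := LinearMap.mem_ker.2 hmem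
      rw [hW0, Submodule.mem_bot, sub_eq_zero] at this
      simpa using this
    constructor
    · have : Matrix.toLin' R = Matrix.toLin' (1 : Matrix p p F) := by
        rw [← heV, heV1, Matrix.toLin'_one]
      exact Matrix.toLin'.injective this
    · have : Matrix.toLin' S = Matrix.toLin' (1 : Matrix q q F) := by
        rw [← heW, heW1, Matrix.toLin'_one]
      exact Matrix.toLin'.injective this
  · -- the equivalence, rewriting A' into block-diagonal shape
    have : (fun i => Matrix.fromBlocks ((A' i).toBlocks₁₁) 0 0 ((A' i).toBlocks₂₂)) = A' :=
      funext hA'eq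
    rw [this]
    exact hequiv

end TupleBasics

section EndAlg

variable {F : Type*} [Field F] {t : ℕ}
variable {p q px qx py qy : Type*} [Fintype p] [Fintype q] [Fintype px] [Fintype qx]
  [Fintype py] [Fintype qy]
  [DecidableEq p] [DecidableEq q] [DecidableEq px] [DecidableEq qx] [DecidableEq py] [DecidableEq qy]

/-- Idempotents in the endomorphism algebra of an indecomposable tuple are trivial. -/
theorem tupleEnd_idem_trivial (A : Fin t → Matrix p q F) (hA : TupleIndecomposable A) :
    ∀ e : ↥(tupleEnd A), e * e = e → e = 0 ∨ e = 1 := by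
  intro e he
  have hval : (e : Matrix p p F × Matrix q q F) * e = e := by
    have := congrArg Subtype.val he
    simpa using this
  have h1 : (e : Matrix p p F × Matrix q q F).1 * (e : Matrix p p F × Matrix q q F).1
      = (e : Matrix p p F × Matrix q q F).1 := by
    have := congrArg Prod.fst hval
    simpa using this
  have h2 : (e : Matrix p p F × Matrix q q F).2 * (e : Matrix p p F × Matrix q q F).2
      = (e : Matrix p p F × Matrix q q F).2 := by
    have := congrArg Prod.snd hval
    simpa using this
  rcases ks_idem_trivial A hA _ _ e.2 h1 h2 with ⟨hR, hS⟩ | ⟨hR, hS⟩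
  · left
    apply Subtype.ext
    apply Prod.ext
    · simpa using hR
    · simpa using hS
  · right
    apply Subtype.ext
    apply Prod.ext
    · simpa using hR
    · simpa using hS

/-- Extraction of an isomorphism from a unit composite. -/
theorem ks_extract (X : Fin t → Matrix px qx F) (Y : Fin t → Matrix py qy F)
    (hY : TupleIndecomposable Y) (hcard : 0 < Fintype.card px + Fintype.card qx)
    (F1 : Matrix py px F) (F2 : Matrix qy qx F) (G1 : Matrix px py F) (G2 : Matrix qx qy F)
    (hf : ∀ i, F1 * X i = Y i * F2) (hg : ∀ i, G1 * Y i = X i * G2)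
    (u : ↥(tupleEnd X)) (huval : (u : Matrix px px F × Matrix qx qx F) = (G1 * F1, G2 * F2))
    (hu : IsUnit u) :
    ∃ (w1 : Matrix px py F) (w2 : Matrix qx qy F), (∀ i, w1 * Y i = X i * w2) ∧
      F1 * w1 = 1 ∧ w1 * F1 = 1 ∧ F2 * w2 = 1 ∧ w2 * F2 = 1 := by
  obtain ⟨uu, huu⟩ := hu
  set H : ↥(tupleEnd X) := ((uu⁻¹ : (↥(tupleEnd X))ˣ) : ↥(tupleEnd X)) with hH
  have h1 : u * H = 1 := by rw [← huu, hH]; exact_mod_cast uu.mul_inv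
  have h2 : H * u = 1 := by rw [← huu, hH]; exact_mod_cast uu.inv_mul
  set H1 := (H : Matrix px px F × Matrix qx qx F).1 with hH1
  set H2 := (H : Matrix px px F × Matrix qx qx F).2 with hH2
  have hHhom : ∀ i, H1 * X i = X i * H2 := H.2
  have h1a : (G1 * F1) * H1 = 1 := by
    have h' := congrArg (fun z => (Subtype.val z).1) h1
    simpa [huval, hH1] using h'
  have h1b : (G2 * F2) * H2 = 1 := by
    have h' := congrArg (fun z => (Subtype.val z).2) h1
    simpa [huval, hH2] using h'
  have h2a : H1 * (G1 * F1) = 1 := by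
    have h' := congrArg (fun z => (Subtype.val z).1) h2
    simpa [huval, hH1] using h'
  have h2b : H2 * (G2 * F2) = 1 := by
    have h' := congrArg (fun z => (Subtype.val z).2) h2
    simpa [huval, hH2] using h'
  have he1hom : ∀ i, (F1 * (H1 * G1)) * Y i = Y i * (F2 * (H2 * G2)) := by
    intro i
    calc (F1 * (H1 * G1)) * Y i = F1 * (H1 * (G1 * Y i)) := by simp [Matrix.mul_assoc]
      _ = F1 * (H1 * (X i * G2)) := by rw [hg i]
      _ = F1 * ((H1 * X i) * G2) := by simp [Matrix.mul_assoc]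
      _ = F1 * ((X i * H2) * G2) := by rw [hHhom i]
      _ = (F1 * X i) * (H2 * G2) := by simp [Matrix.mul_assoc]
      _ = (Y i * F2) * (H2 * G2) := by rw [hf i]
      _ = Y i * (F2 * (H2 * G2)) := by simp [Matrix.mul_assoc]
  have he1idem : (F1 * (H1 * G1)) * (F1 * (H1 * G1)) = F1 * (H1 * G1) := by
    calc (F1 * (H1 * G1)) * (F1 * (H1 * G1))
        = F1 * ((H1 * (G1 * F1)) * (H1 * G1)) := by simp [Matrix.mul_assoc]
      _ = F1 * (H1 * G1) := by rw [h2a, Matrix.one_mul]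
  have he2idem : (F2 * (H2 * G2)) * (F2 * (H2 * G2)) = F2 * (H2 * G2) := by
    calc (F2 * (H2 * G2)) * (F2 * (H2 * G2))
        = F2 * ((H2 * (G2 * F2)) * (H2 * G2)) := by simp [Matrix.mul_assoc]
      _ = F2 * (H2 * G2) := by rw [h2b, Matrix.one_mul]
  rcases ks_idem_trivial Y hY _ _ he1hom he1idem he2idem with ⟨z1, z2⟩ | ⟨o1, o2⟩
  · exfalso
    have hz1 : G1 * F1 = 0 := by
      calc G1 * F1 = ((G1 * F1) * H1) * (G1 * F1) := by rw [h1a, Matrix.one_mul]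
        _ = G1 * ((F1 * (H1 * G1)) * F1) := by simp [Matrix.mul_assoc]
        _ = 0 := by rw [z1, Matrix.zero_mul, Matrix.mul_zero]
    have hz2 : G2 * F2 = 0 := by
      calc G2 * F2 = ((G2 * F2) * H2) * (G2 * F2) := by rw [h1b, Matrix.one_mul]
        _ = G2 * ((F2 * (H2 * G2)) * F2) := by simp [Matrix.mul_assoc]
        _ = 0 := by rw [z2, Matrix.zero_mul, Matrix.mul_zero]
    have h10 : (1 : Matrix px px F) = 0 := by rw [← h1a, hz1, Matrix.zero_mul]
    have h20 : (1 : Matrix qx qx F) = 0 := by rw [← h1b, hz2, Matrix.zero_mul]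
    rcases Nat.lt_or_ge 0 (Fintype.card px) with hp | hp
    · haveI : Nonempty px := Fintype.card_pos_iff.1 hp
      exact ks_matrix_one_ne_zero (F := F) (p := px) h10
    · have hq : 0 < Fintype.card qx := by omega
      haveI : Nonempty qx := Fintype.card_pos_iff.1 hq
      exact ks_matrix_one_ne_zero (F := F) (p := qx) h20
  · refine ⟨H1 * G1, H2 * G2, fun i => ?_, o1, ?_, o2, ?_⟩
    · calc (H1 * G1) * Y i = H1 * (G1 * Y i) := by simp [Matrix.mul_assoc]
        _ = H1 * (X i * G2) := by rw [hg i]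
        _ = (H1 * X i) * G2 := by simp [Matrix.mul_assoc]
        _ = (X i * H2) * G2 := by rw [hHhom i]
        _ = X i * (H2 * G2) := by simp [Matrix.mul_assoc]
    · calc (H1 * G1) * F1 = H1 * (G1 * F1) := by simp [Matrix.mul_assoc]
        _ = 1 := h2a
    · calc (H2 * G2) * F2 = H2 * (G2 * F2) := by simp [Matrix.mul_assoc]
        _ = 1 := h2b

end EndAlg

/-- The equivalence splitting off the `b₀` summand of a sigma type over `Fin (n+1)`. -/
def ksSigmaEquiv {n : ℕ} (msz : Fin (n + 1) → ℕ) (b₀ : Fin (n + 1)) :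
    ((Σ j : Fin n, Fin (msz (b₀.succAbove j))) ⊕ Fin (msz b₀)) ≃ (Σ b : Fin (n + 1), Fin (msz b)) where
  toFun := Sum.elim (fun s => ⟨b₀.succAbove s.1, s.2⟩) (fun x => ⟨b₀, x⟩)
  invFun s :=
    Fin.insertNth (α := fun b => Fin (msz b) →
        ((Σ j : Fin n, Fin (msz (b₀.succAbove j))) ⊕ Fin (msz b₀)))
      b₀ (fun v => Sum.inr v) (fun j v => Sum.inl ⟨j, v⟩) s.1 s.2
  left_inv := by
    rintro (⟨j, x⟩ | x)
    · simp
    · simp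
  right_inv := by
    rintro ⟨b, x⟩
    revert x
    refine Fin.succAboveCases b₀ ?_ ?_ b
    · intro x; simp
    · intro j x; simp

section Struct

variable {F : Type*} [Field F] {t : ℕ}

theorem ks_blockDiag_submatrix {n : ℕ} (msz nsz : Fin (n + 1) → ℕ)
    (M : ∀ b, Matrix (Fin (msz b)) (Fin (nsz b)) F) (b₀ : Fin (n + 1)) :
    (Matrix.blockDiagonal' M).submatrix ⇑(ksSigmaEquiv msz b₀) ⇑(ksSigmaEquiv nsz b₀) =
      Matrix.fromBlocks (Matrix.blockDiagonal' fun j => M (b₀.succAbove j)) 0 0 (M b₀) := by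
  ext x y
  rcases x with (⟨j, a⟩ | a) <;> rcases y with (⟨j', b⟩ | b)
  · show Matrix.blockDiagonal' M ⟨b₀.succAbove j, a⟩ ⟨b₀.succAbove j', b⟩ =
      Matrix.blockDiagonal' (fun j => M (b₀.succAbove j)) ⟨j, a⟩ ⟨j', b⟩
    rcases eq_or_ne j j' with rfl | hne
    · rw [Matrix.blockDiagonal'_apply_eq, Matrix.blockDiagonal'_apply_eq]
    · rw [Matrix.blockDiagonal'_apply_ne _ _ _ (fun h => hne (Fin.succAbove_right_injective h)),
        Matrix.blockDiagonal'_apply_ne _ _ _ hne]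
  · show Matrix.blockDiagonal' M ⟨b₀.succAbove j, a⟩ ⟨b₀, b⟩ = 0
    exact Matrix.blockDiagonal'_apply_ne _ _ _ (Fin.succAbove_ne b₀ j)
  · show Matrix.blockDiagonal' M ⟨b₀, a⟩ ⟨b₀.succAbove j', b⟩ = 0
    exact Matrix.blockDiagonal'_apply_ne _ _ _ (Ne.symm (Fin.succAbove_ne b₀ j'))
  · show Matrix.blockDiagonal' M ⟨b₀, a⟩ ⟨b₀, b⟩ = M b₀ a b
    exact Matrix.blockDiagonal'_apply_eq _ _ _ _

end Struct

section Cancel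

variable {F : Type*} [Field F] {t : ℕ}
variable {a b : Type*} [Fintype a] [Fintype b] [DecidableEq a] [DecidableEq b]

theorem ks_triple_inv (μ μ' : Matrix b b F) (R : Matrix b a F) (R' : Matrix a b F)
    (ν ν' : Matrix a a F) (hμ : μ * μ' = 1) (hμ' : μ' * μ = 1) (hν : ν * ν' = 1)
    (hν' : ν' * ν = 1) (hR : R * R' = 1) (hR' : R' * R = 1) :
    (μ * R * ν) * (ν' * R' * μ') = 1 ∧ (ν' * R' * μ') * (μ * R * ν) = 1 := by
  constructor
  · have e1 : (μ * R * ν) * (ν' * R' * μ') = μ * (R * ((ν * ν') * (R' * μ'))) := by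
      simp only [Matrix.mul_assoc]
    rw [e1, hν, Matrix.one_mul, ← Matrix.mul_assoc R R' μ', hR, Matrix.one_mul, hμ]
  · have e1 : (ν' * R' * μ') * (μ * R * ν) = ν' * (R' * ((μ' * μ) * (R * ν))) := by
      simp only [Matrix.mul_assoc]
    rw [e1, hμ', Matrix.one_mul, ← Matrix.mul_assoc R' R ν, hR', Matrix.one_mul, hν']

variable {a1 a2 b1 b2 : Type*} [Fintype a1] [Fintype a2] [Fintype b1] [Fintype b2]
  [DecidableEq a1] [DecidableEq a2] [DecidableEq b1] [DecidableEq b2]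

theorem ks_toBlocks_one {x y : Type*} [Fintype x] [Fintype y] [DecidableEq x] [DecidableEq y] :
    (1 : Matrix (x ⊕ y) (x ⊕ y) F).toBlocks₁₁ = 1 := by
  rw [← Matrix.fromBlocks_one (l := x) (m := y) (α := F), Matrix.toBlocks_fromBlocks₁₁]

theorem ks_corner_inv (E : Matrix b1 a1 F) (G : Matrix b2 a2 F)
    (C : Matrix (a1 ⊕ a2) (b1 ⊕ b2) F)
    (h1 : Matrix.fromBlocks E 0 0 G * C = 1) (h2 : C * Matrix.fromBlocks E 0 0 G = 1) :
    E * C.toBlocks₁₁ = 1 ∧ C.toBlocks₁₁ * E = 1 := by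
  constructor
  · have h' := h1
    rw [← Matrix.fromBlocks_toBlocks C, Matrix.fromBlocks_multiply, ← Matrix.fromBlocks_one] at h'
    have := congrArg Matrix.toBlocks₁₁ h'
    simpa [ks_toBlocks_one] using this
  · have h' := h2
    rw [← Matrix.fromBlocks_toBlocks C, Matrix.fromBlocks_multiply, ← Matrix.fromBlocks_one] at h'
    have := congrArg Matrix.toBlocks₁₁ h'
    simpa [ks_toBlocks_one] using this

theorem ks_unitriangular_up (B : Matrix b1 b2 F) :
    Matrix.fromBlocks (1 : Matrix b1 b1 F) B (0 : Matrix b2 b1 F) (1 : Matrix b2 b2 F) *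
      Matrix.fromBlocks (1 : Matrix b1 b1 F) (-B) (0 : Matrix b2 b1 F) (1 : Matrix b2 b2 F) = 1 ∧
    Matrix.fromBlocks (1 : Matrix b1 b1 F) (-B) (0 : Matrix b2 b1 F) (1 : Matrix b2 b2 F) *
      Matrix.fromBlocks (1 : Matrix b1 b1 F) B (0 : Matrix b2 b1 F) (1 : Matrix b2 b2 F) = 1 := by
  constructor <;> (rw [Matrix.fromBlocks_multiply, ← Matrix.fromBlocks_one]; congr 1 <;> simp)

theorem ks_unitriangular_low (B : Matrix b2 b1 F) :
    Matrix.fromBlocks (1 : Matrix b1 b1 F) (0 : Matrix b1 b2 F) B (1 : Matrix b2 b2 F) *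
      Matrix.fromBlocks (1 : Matrix b1 b1 F) (0 : Matrix b1 b2 F) (-B) (1 : Matrix b2 b2 F) = 1 ∧
    Matrix.fromBlocks (1 : Matrix b1 b1 F) (0 : Matrix b1 b2 F) (-B) (1 : Matrix b2 b2 F) *
      Matrix.fromBlocks (1 : Matrix b1 b1 F) (0 : Matrix b1 b2 F) B (1 : Matrix b2 b2 F) = 1 := by
  constructor <;> (rw [Matrix.fromBlocks_multiply, ← Matrix.fromBlocks_one]; congr 1 <;> simp)

end Cancel

section BigCancel

variable {F : Type*} [Field F] {t : ℕ}
variable {pa qa px qx pb qb py qy : Type*}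
  [Fintype pa] [Fintype qa] [Fintype px] [Fintype qx]
  [Fintype pb] [Fintype qb] [Fintype py] [Fintype qy]
  [DecidableEq pa] [DecidableEq qa] [DecidableEq px] [DecidableEq qx]
  [DecidableEq pb] [DecidableEq qb] [DecidableEq py] [DecidableEq qy]

theorem ks_cancel (DA : Fin t → Matrix pa qa F) (X : Fin t → Matrix px qx F)
    (DB : Fin t → Matrix pb qb F) (Y : Fin t → Matrix py qy F)
    (R : Matrix (pb ⊕ py) (pa ⊕ px) F) (R' : Matrix (pa ⊕ px) (pb ⊕ py) F)
    (S : Matrix (qa ⊕ qx) (qb ⊕ qy) F) (S' : Matrix (qb ⊕ qy) (qa ⊕ qx) F)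
    (hRR' : R * R' = 1) (hR'R : R' * R = 1) (hSS' : S * S' = 1) (hS'S : S' * S = 1)
    (hRMS : ∀ i, R * Matrix.fromBlocks (DA i) 0 0 (X i) * S = Matrix.fromBlocks (DB i) 0 0 (Y i))
    (w1 : Matrix px py F) (w2 : Matrix qx qy F)
    (hw1a : R.toBlocks₂₂ * w1 = 1) (hw1b : w1 * R.toBlocks₂₂ = 1)
    (hw2a : S'.toBlocks₂₂ * w2 = 1) (hw2b : w2 * S'.toBlocks₂₂ = 1)
    (hwhom : ∀ i, w1 * Y i = X i * w2) :
    ∃ (E : Matrix pb pa F) (E' : Matrix pa pb F) (U : Matrix qa qb F) (U' : Matrix qb qa F),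
      E * E' = 1 ∧ E' * E = 1 ∧ U * U' = 1 ∧ U' * U = 1 ∧ ∀ i, E * DA i * U = DB i := by
  have hRM : ∀ i, R * Matrix.fromBlocks (DA i) 0 0 (X i) =
      Matrix.fromBlocks (DB i) 0 0 (Y i) * S' := by
    intro i
    calc R * Matrix.fromBlocks (DA i) 0 0 (X i)
        = (R * Matrix.fromBlocks (DA i) 0 0 (X i)) * (S * S') := by rw [hSS', Matrix.mul_one]
      _ = (R * Matrix.fromBlocks (DA i) 0 0 (X i) * S) * S' := by simp only [Matrix.mul_assoc]
      _ = Matrix.fromBlocks (DB i) 0 0 (Y i) * S' := by rw [hRMS i]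
  have hblock : ∀ i,
      Matrix.fromBlocks (R.toBlocks₁₁ * DA i) (R.toBlocks₁₂ * X i)
        (R.toBlocks₂₁ * DA i) (R.toBlocks₂₂ * X i) =
      Matrix.fromBlocks (DB i * S'.toBlocks₁₁) (DB i * S'.toBlocks₁₂)
        (Y i * S'.toBlocks₂₁) (Y i * S'.toBlocks₂₂) := by
    intro i
    have h' := hRM i
    rw [← Matrix.fromBlocks_toBlocks R, ← Matrix.fromBlocks_toBlocks S',
      Matrix.fromBlocks_multiply, Matrix.fromBlocks_multiply] at h'
    simpa using h'
  have h11 : ∀ i, R.toBlocks₁₁ * DA i = DB i * S'.toBlocks₁₁ := by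
    intro i
    have hb := congrArg Matrix.toBlocks₁₁ (hblock i); simpa using hb
  have h12 : ∀ i, R.toBlocks₁₂ * X i = DB i * S'.toBlocks₁₂ := by
    intro i
    have hb := congrArg Matrix.toBlocks₁₂ (hblock i); simpa using hb
  have h21 : ∀ i, R.toBlocks₂₁ * DA i = Y i * S'.toBlocks₂₁ := by
    intro i
    have hb := congrArg Matrix.toBlocks₂₁ (hblock i); simpa using hb
  have hcorner : ∀ i, (R.toBlocks₁₁ - R.toBlocks₁₂ * (w1 * R.toBlocks₂₁)) * DA i
      = DB i * (S'.toBlocks₁₁ - S'.toBlocks₁₂ * (w2 * S'.toBlocks₂₁)) := by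
    intro i
    calc (R.toBlocks₁₁ - R.toBlocks₁₂ * (w1 * R.toBlocks₂₁)) * DA i
        = R.toBlocks₁₁ * DA i - R.toBlocks₁₂ * (w1 * (R.toBlocks₂₁ * DA i)) := by
          rw [Matrix.sub_mul]; simp only [Matrix.mul_assoc]
      _ = DB i * S'.toBlocks₁₁ - R.toBlocks₁₂ * (w1 * (Y i * S'.toBlocks₂₁)) := by
          rw [h11 i, h21 i]
      _ = DB i * S'.toBlocks₁₁ - R.toBlocks₁₂ * ((w1 * Y i) * S'.toBlocks₂₁) := by
          simp only [Matrix.mul_assoc]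
      _ = DB i * S'.toBlocks₁₁ - R.toBlocks₁₂ * ((X i * w2) * S'.toBlocks₂₁) := by
          rw [hwhom i]
      _ = DB i * S'.toBlocks₁₁ - (R.toBlocks₁₂ * X i) * (w2 * S'.toBlocks₂₁) := by
          simp only [Matrix.mul_assoc]
      _ = DB i * S'.toBlocks₁₁ - DB i * (S'.toBlocks₁₂ * (w2 * S'.toBlocks₂₁)) := by
          rw [h12 i]; simp only [Matrix.mul_assoc]
      _ = DB i * (S'.toBlocks₁₁ - S'.toBlocks₁₂ * (w2 * S'.toBlocks₂₁)) := by
          rw [Matrix.mul_sub]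
  -- factorization of the block-diagonalized versions
  have hRhfact : Matrix.fromBlocks (R.toBlocks₁₁ - R.toBlocks₁₂ * (w1 * R.toBlocks₂₁))
        (0 : Matrix pb px F) (0 : Matrix py pa F) R.toBlocks₂₂ =
      Matrix.fromBlocks (1 : Matrix pb pb F) (-(R.toBlocks₁₂ * w1)) (0 : Matrix py pb F)
        (1 : Matrix py py F) * R *
      Matrix.fromBlocks (1 : Matrix pa pa F) (0 : Matrix pa px F) (-(w1 * R.toBlocks₂₁))
        (1 : Matrix px px F) := by
    conv_rhs => rw [show R = Matrix.fromBlocks R.toBlocks₁₁ R.toBlocks₁₂ R.toBlocks₂₁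
      R.toBlocks₂₂ from (Matrix.fromBlocks_toBlocks R).symm]
    rw [Matrix.fromBlocks_multiply, Matrix.fromBlocks_multiply, Matrix.fromBlocks_inj]
    refine ⟨?_, ?_, ?_, ?_⟩
    · simp [Matrix.mul_assoc, hw1a, hw1b, Matrix.mul_add, Matrix.add_mul, sub_eq_add_neg]
    · simp [Matrix.mul_assoc, hw1a, hw1b]
    · simp [Matrix.mul_assoc, hw1a, hw1b]
      rw [← Matrix.mul_assoc, hw1a, Matrix.one_mul]
      simp
    · simp
  have hThfact : Matrix.fromBlocks (S'.toBlocks₁₁ - S'.toBlocks₁₂ * (w2 * S'.toBlocks₂₁))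
        (0 : Matrix qb qx F) (0 : Matrix qy qa F) S'.toBlocks₂₂ =
      Matrix.fromBlocks (1 : Matrix qb qb F) (-(S'.toBlocks₁₂ * w2)) (0 : Matrix qy qb F)
        (1 : Matrix qy qy F) * S' *
      Matrix.fromBlocks (1 : Matrix qa qa F) (0 : Matrix qa qx F) (-(w2 * S'.toBlocks₂₁))
        (1 : Matrix qx qx F) := by
    conv_rhs => rw [show S' = Matrix.fromBlocks S'.toBlocks₁₁ S'.toBlocks₁₂ S'.toBlocks₂₁
      S'.toBlocks₂₂ from (Matrix.fromBlocks_toBlocks S').symm]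
    rw [Matrix.fromBlocks_multiply, Matrix.fromBlocks_multiply, Matrix.fromBlocks_inj]
    refine ⟨?_, ?_, ?_, ?_⟩
    · simp [Matrix.mul_assoc, hw2a, hw2b, Matrix.mul_add, Matrix.add_mul, sub_eq_add_neg]
    · simp [Matrix.mul_assoc, hw2a, hw2b]
    · simp [Matrix.mul_assoc, hw2a, hw2b]
      rw [← Matrix.mul_assoc, hw2a, Matrix.one_mul]
      simp
    · simp
  -- invertibility of the block-diagonalized versions
  have hμR := ks_unitriangular_up (F := F) (R.toBlocks₁₂ * w1)
  have hνR := ks_unitriangular_low (F := F) (w1 * R.toBlocks₂₁)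
  have hfinR := ks_triple_inv (F := F)
    (Matrix.fromBlocks 1 (-(R.toBlocks₁₂ * w1)) 0 1)
    (Matrix.fromBlocks 1 (R.toBlocks₁₂ * w1) 0 1) R R'
    (Matrix.fromBlocks 1 0 (-(w1 * R.toBlocks₂₁)) 1)
    (Matrix.fromBlocks 1 0 (w1 * R.toBlocks₂₁) 1)
    hμR.2 hμR.1 hνR.2 hνR.1 hRR' hR'R
  rw [← hRhfact] at hfinR
  have hμT := ks_unitriangular_up (F := F) (S'.toBlocks₁₂ * w2)
  have hνT := ks_unitriangular_low (F := F) (w2 * S'.toBlocks₂₁)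
  have hfinT := ks_triple_inv (F := F)
    (Matrix.fromBlocks 1 (-(S'.toBlocks₁₂ * w2)) 0 1)
    (Matrix.fromBlocks 1 (S'.toBlocks₁₂ * w2) 0 1) S' S
    (Matrix.fromBlocks 1 0 (-(w2 * S'.toBlocks₂₁)) 1)
    (Matrix.fromBlocks 1 0 (w2 * S'.toBlocks₂₁) 1)
    hμT.2 hμT.1 hνT.2 hνT.1 hS'S hSS'
  rw [← hThfact] at hfinT
  obtain ⟨hcE1, hcE2⟩ := ks_corner_inv (F := F)
    (R.toBlocks₁₁ - R.toBlocks₁₂ * (w1 * R.toBlocks₂₁)) R.toBlocks₂₂ _ hfinR.1 hfinR.2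
  obtain ⟨hcT1, hcT2⟩ := ks_corner_inv (F := F)
    (S'.toBlocks₁₁ - S'.toBlocks₁₂ * (w2 * S'.toBlocks₂₁)) S'.toBlocks₂₂ _ hfinT.1 hfinT.2
  refine ⟨R.toBlocks₁₁ - R.toBlocks₁₂ * (w1 * R.toBlocks₂₁), _, _,
    S'.toBlocks₁₁ - S'.toBlocks₁₂ * (w2 * S'.toBlocks₂₁), hcE1, hcE2, hcT2, hcT1, fun i => ?_⟩
  calc (R.toBlocks₁₁ - R.toBlocks₁₂ * (w1 * R.toBlocks₂₁)) * DA i *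
        ((Matrix.fromBlocks 1 0 (w2 * S'.toBlocks₂₁) 1 : Matrix (qa ⊕ qx) (qa ⊕ qx) F) * S *
          (Matrix.fromBlocks 1 (S'.toBlocks₁₂ * w2) 0 1 : Matrix (qb ⊕ qy) (qb ⊕ qy) F) : Matrix (qa ⊕ qx) (qb ⊕ qy) F).toBlocks₁₁
      = (DB i * (S'.toBlocks₁₁ - S'.toBlocks₁₂ * (w2 * S'.toBlocks₂₁))) *
        ((Matrix.fromBlocks 1 0 (w2 * S'.toBlocks₂₁) 1 : Matrix (qa ⊕ qx) (qa ⊕ qx) F) * S *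
          (Matrix.fromBlocks 1 (S'.toBlocks₁₂ * w2) 0 1 : Matrix (qb ⊕ qy) (qb ⊕ qy) F) : Matrix (qa ⊕ qx) (qb ⊕ qy) F).toBlocks₁₁ := by rw [hcorner i]
    _ = DB i := by rw [Matrix.mul_assoc, hcT1, Matrix.mul_one]
  done

end BigCancel


section MainExtras

variable {F : Type*} [Field F] {t : ℕ}

theorem ks_isEmpty_of_inv {a c : Type*} [Fintype a] [Fintype c] [DecidableEq a]
    (U : Matrix a c F) (V : Matrix c a F) (h : U * V = 1) (hc : IsEmpty c) : IsEmpty a := by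
  by_contra hne
  rw [not_isEmpty_iff] at hne
  obtain ⟨x⟩ := hne
  have hent := congrFun (congrFun h x) x
  rw [Matrix.mul_apply] at hent
  haveI := hc
  rw [Finset.univ_eq_empty, Finset.sum_empty] at hent
  rw [Matrix.one_apply_eq] at hent
  exact zero_ne_one hent

end MainExtras


/-- **Uniqueness in the Krull–Schmidt decomposition for equivalence**: if a direct sum
of tuples `P₁ ⊕ ⋯ ⊕ P_k`, each indecomposable with respect to equivalence, is equivalent
to a direct sum `Q₁ ⊕ ⋯ ⊕ Q_l` of indecomposable tuples, then `k = l` and there is a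
permutation `σ` with `P_i` equivalent to `Q_{σ(i)}` for every `i`. -/
theorem tuple_direct_sum_decomposition_unique
    {F : Type*} [Field F] {t k l : ℕ}
    (ms ns : Fin k → ℕ) (ms' ns' : Fin l → ℕ)
    (P : ∀ j, Fin t → Matrix (Fin (ms j)) (Fin (ns j)) F)
    (Q : ∀ j, Fin t → Matrix (Fin (ms' j)) (Fin (ns' j)) F)
    (hP : ∀ j, TupleIndecomposable (P j))
    (hQ : ∀ j, TupleIndecomposable (Q j))
    (h : TuplesEquiv (fun i => Matrix.blockDiagonal' (fun j => P j i))
      (fun i => Matrix.blockDiagonal' (fun j => Q j i))) :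
    k = l ∧ ∃ σ : Fin k ≃ Fin l, ∀ j, TuplesEquiv (P j) (Q (σ j)) := by
  induction k generalizing l ms' ns' Q with
  | zero =>
    obtain ⟨R, R', S, S', hRR', hR'R, hSS', hS'S, hM⟩ := h
    have hl : l = 0 := by
      by_contra hl0
      have hrowP : IsEmpty (Σ j : Fin 0, Fin (ms j)) := by
        refine ⟨fun x => ?_⟩; exact x.1.elim0
      have hcolP : IsEmpty (Σ j : Fin 0, Fin (ns j)) := by
        refine ⟨fun x => ?_⟩; exact x.1.elim0
      have hrow : IsEmpty (Σ b : Fin l, Fin (ms' b)) :=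
        ks_isEmpty_of_inv R R' hRR' hrowP
      have hcol : IsEmpty (Σ b : Fin l, Fin (ns' b)) :=
        ks_isEmpty_of_inv S' S hS'S hcolP
      set b : Fin l := ⟨0, Nat.pos_of_ne_zero hl0⟩
      have hms : ms' b = 0 := by
        by_contra hms0
        exact hrow.false ⟨b, ⟨0, Nat.pos_of_ne_zero hms0⟩⟩
      have hns : ns' b = 0 := by
        by_contra hns0
        exact hcol.false ⟨b, ⟨0, Nat.pos_of_ne_zero hns0⟩⟩
      have := (hQ b).1
      simp [hms, hns] at this
    subst hl
    exact ⟨rfl, Equiv.refl _, fun j => j.elim0⟩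
  | succ k ih =>
    -- Step 0: l is a successor
    have hlpos : l ≠ 0 := by
      intro hl0
      subst hl0
      obtain ⟨R, R', S, S', hRR', hR'R, hSS', hS'S, hM⟩ := h
      have hrowQ : IsEmpty (Σ b : Fin 0, Fin (ms' b)) := by
        refine ⟨fun x => ?_⟩; exact x.1.elim0
      have hcolQ : IsEmpty (Σ b : Fin 0, Fin (ns' b)) := by
        refine ⟨fun x => ?_⟩; exact x.1.elim0
      have hrow : IsEmpty (Σ j : Fin (k+1), Fin (ms j)) :=
        ks_isEmpty_of_inv R' R hR'R hrowQ
      have hcol : IsEmpty (Σ j : Fin (k+1), Fin (ns j)) :=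
        ks_isEmpty_of_inv S S' hSS' hcolQ
      have hms : ms (Fin.last k) = 0 := by
        by_contra hms0
        exact hrow.false ⟨Fin.last k, ⟨0, Nat.pos_of_ne_zero hms0⟩⟩
      have hns : ns (Fin.last k) = 0 := by
        by_contra hns0
        exact hcol.false ⟨Fin.last k, ⟨0, Nat.pos_of_ne_zero hns0⟩⟩
      have := (hP (Fin.last k)).1
      simp [hms, hns] at this
    obtain ⟨l', rfl⟩ : ∃ l', l = l' + 1 := ⟨l - 1, by omega⟩
    -- Step 1: bring the P side into 2x2 block form, splitting off the last block
    have hstructP : ∀ i, (Matrix.blockDiagonal' fun j => P j i).submatrix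
        ⇑(ksSigmaEquiv ms (Fin.last k)) ⇑(ksSigmaEquiv ns (Fin.last k)) =
        Matrix.fromBlocks
          (Matrix.blockDiagonal' fun j => P ((Fin.last k).succAbove j) i) 0 0
          (P (Fin.last k) i) :=
      fun i => ks_blockDiag_submatrix ms ns (fun b => P b i) (Fin.last k)
    have hTP : TuplesEquiv (fun i => Matrix.blockDiagonal' fun j => P j i)
        (fun i => Matrix.fromBlocks
          (Matrix.blockDiagonal' fun j => P ((Fin.last k).succAbove j) i) 0 0
          (P (Fin.last k) i)) := by
      have h0 := TuplesEquiv.reindex (fun i => Matrix.blockDiagonal' fun j => P j i)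
        (ksSigmaEquiv ms (Fin.last k)) (ksSigmaEquiv ns (Fin.last k))
      simp only [hstructP] at h0
      exact h0
    have h1 : TuplesEquiv
        (fun i => Matrix.fromBlocks
          (Matrix.blockDiagonal' fun j => P ((Fin.last k).succAbove j) i) 0 0
          (P (Fin.last k) i))
        (fun i => Matrix.blockDiagonal' fun b => Q b i) := hTP.symm.trans h
    obtain ⟨R, R', S, S', hRR', hR'R, hSS', hS'S, hRMS⟩ := h1
    have hRM : ∀ i, R * Matrix.fromBlocks
        (Matrix.blockDiagonal' fun j => P ((Fin.last k).succAbove j) i) 0 0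
        (P (Fin.last k) i) = Matrix.blockDiagonal' (fun b => Q b i) * S' := by
      intro i
      calc R * Matrix.fromBlocks _ 0 0 (P (Fin.last k) i)
          = (R * Matrix.fromBlocks
              (Matrix.blockDiagonal' fun j => P ((Fin.last k).succAbove j) i) 0 0
              (P (Fin.last k) i)) * (S * S') := by rw [hSS', Matrix.mul_one]; rfl
        _ = (R * Matrix.fromBlocks
              (Matrix.blockDiagonal' fun j => P ((Fin.last k).succAbove j) i) 0 0
              (P (Fin.last k) i) * S) * S' := by simp only [Matrix.mul_assoc]
        _ = Matrix.blockDiagonal' (fun b => Q b i) * S' := by rw [hRMS i]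
    have hR'N : ∀ i, R' * Matrix.blockDiagonal' (fun b => Q b i) =
        Matrix.fromBlocks
          (Matrix.blockDiagonal' fun j => P ((Fin.last k).succAbove j) i) 0 0
          (P (Fin.last k) i) * S := by
      intro i
      calc R' * Matrix.blockDiagonal' (fun b => Q b i)
          = R' * (R * Matrix.fromBlocks
              (Matrix.blockDiagonal' fun j => P ((Fin.last k).succAbove j) i) 0 0
              (P (Fin.last k) i) * S) := by rw [hRMS i]
        _ = ((R' * R) * Matrix.fromBlocks
              (Matrix.blockDiagonal' fun j => P ((Fin.last k).succAbove j) i) 0 0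
              (P (Fin.last k) i)) * S := by simp only [Matrix.mul_assoc]
        _ = _ := by rw [hR'R, Matrix.one_mul]
    -- Step 2: block components of the isomorphism
    set X := P (Fin.last k) with hX
    set f1 : ∀ b : Fin (l' + 1), Matrix (Fin (ms' b)) (Fin (ms (Fin.last k))) F :=
      fun b => Matrix.of fun x y => R ⟨b, x⟩ (Sum.inr y) with hf1
    set f2 : ∀ b : Fin (l' + 1), Matrix (Fin (ns' b)) (Fin (ns (Fin.last k))) F :=
      fun b => Matrix.of fun x y => S' ⟨b, x⟩ (Sum.inr y) with hf2
    set g1 : ∀ b : Fin (l' + 1), Matrix (Fin (ms (Fin.last k))) (Fin (ms' b)) F :=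
      fun b => Matrix.of fun x y => R' (Sum.inr x) ⟨b, y⟩ with hg1
    set g2 : ∀ b : Fin (l' + 1), Matrix (Fin (ns (Fin.last k))) (Fin (ns' b)) F :=
      fun b => Matrix.of fun x y => S (Sum.inr x) ⟨b, y⟩ with hg2
    have hf : ∀ b i, f1 b * X i = Q b i * f2 b := by
      intro b i
      ext x y
      have hent := congrFun (congrFun (hRM i) ⟨b, x⟩) (Sum.inr y)
      have hL : (R * Matrix.fromBlocks
          (Matrix.blockDiagonal' fun j => P ((Fin.last k).succAbove j) i) 0 0
          (X i)) ⟨b, x⟩ (Sum.inr y) = (f1 b * X i) x y := by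
        rw [Matrix.mul_apply, Matrix.mul_apply, Fintype.sum_sum_type]
        simp [hf1]
      have hRside : (Matrix.blockDiagonal' (fun b' => Q b' i) * S') ⟨b, x⟩ (Sum.inr y)
          = (Q b i * f2 b) x y := by
        rw [Matrix.mul_apply, Matrix.mul_apply, ← Finset.univ_sigma_univ, Finset.sum_sigma]
        rw [Finset.sum_eq_single_of_mem b (Finset.mem_univ b) ?side]
        · apply Finset.sum_congr rfl
          intro z _
          rw [Matrix.blockDiagonal'_apply_eq]
          rfl
        case side =>
          intro b' _ hne
          apply Finset.sum_eq_zero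
          intro z _
          rw [Matrix.blockDiagonal'_apply_ne _ _ _ (Ne.symm hne), zero_mul]
      rw [← hL, ← hRside]
      exact hent
    have hg : ∀ b i, g1 b * Q b i = X i * g2 b := by
      intro b i
      ext x y
      have hent := congrFun (congrFun (hR'N i) (Sum.inr x)) ⟨b, y⟩
      have hL : (R' * Matrix.blockDiagonal' (fun b' => Q b' i)) (Sum.inr x) ⟨b, y⟩
          = (g1 b * Q b i) x y := by
        rw [Matrix.mul_apply, Matrix.mul_apply, ← Finset.univ_sigma_univ, Finset.sum_sigma]
        rw [Finset.sum_eq_single_of_mem b (Finset.mem_univ b) ?side2]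
        · apply Finset.sum_congr rfl
          intro z _
          rw [Matrix.blockDiagonal'_apply_eq]
          rfl
        case side2 =>
          intro b' _ hne
          apply Finset.sum_eq_zero
          intro z _
          rw [Matrix.blockDiagonal'_apply_ne _ _ _ hne, mul_zero]
      have hRside : (Matrix.fromBlocks
          (Matrix.blockDiagonal' fun j => P ((Fin.last k).succAbove j) i) 0 0
          (X i) * S) (Sum.inr x) ⟨b, y⟩ = (X i * g2 b) x y := by
        rw [Matrix.mul_apply, Matrix.mul_apply, Fintype.sum_sum_type]
        simp [hg2]
      rw [← hL, ← hRside]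
      exact hent
    -- Step 3: the composites sum to the identity in the endomorphism algebra of X
    have humem : ∀ b : Fin (l' + 1),
        (g1 b * f1 b, g2 b * f2 b) ∈ tupleEnd X := by
      intro b i
      show (g1 b * f1 b) * X i = X i * (g2 b * f2 b)
      calc (g1 b * f1 b) * X i = g1 b * (f1 b * X i) := by rw [Matrix.mul_assoc]
        _ = g1 b * (Q b i * f2 b) := by rw [hf b i]
        _ = (g1 b * Q b i) * f2 b := by rw [Matrix.mul_assoc]
        _ = (X i * g2 b) * f2 b := by rw [hg b i]
        _ = X i * (g2 b * f2 b) := by rw [Matrix.mul_assoc]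
    set u : Fin (l' + 1) → ↥(tupleEnd X) :=
      fun b => ⟨(g1 b * f1 b, g2 b * f2 b), humem b⟩ with hu
    have hsum1 : ∑ b, (g1 b * f1 b) = (1 : Matrix (Fin (ms (Fin.last k))) _ F) := by
      ext x y
      have hent := congrFun (congrFun hR'R (Sum.inr x)) (Sum.inr y)
      rw [Matrix.mul_apply, ← Finset.univ_sigma_univ, Finset.sum_sigma] at hent
      rw [Matrix.sum_apply]
      calc ∑ b, (g1 b * f1 b) x y = ∑ b, ∑ z, R' (Sum.inr x) ⟨b, z⟩ * R ⟨b, z⟩ (Sum.inr y) := by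
            apply Finset.sum_congr rfl
            intro b _
            rw [Matrix.mul_apply]
            rfl
        _ = (1 : Matrix ((Σ j : Fin k, Fin (ms ((Fin.last k).succAbove j))) ⊕
              Fin (ms (Fin.last k))) _ F) (Sum.inr x) (Sum.inr y) := hent
        _ = (1 : Matrix (Fin (ms (Fin.last k))) _ F) x y := by
            simp [Matrix.one_apply, Sum.inr.injEq]
    have hsum2 : ∑ b, (g2 b * f2 b) = (1 : Matrix (Fin (ns (Fin.last k))) _ F) := by
      ext x y
      have hent := congrFun (congrFun hSS' (Sum.inr x)) (Sum.inr y)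
      rw [Matrix.mul_apply, ← Finset.univ_sigma_univ, Finset.sum_sigma] at hent
      rw [Matrix.sum_apply]
      calc ∑ b, (g2 b * f2 b) x y = ∑ b, ∑ z, S (Sum.inr x) ⟨b, z⟩ * S' ⟨b, z⟩ (Sum.inr y) := by
            apply Finset.sum_congr rfl
            intro b _
            rw [Matrix.mul_apply]
            rfl
        _ = (1 : Matrix ((Σ j : Fin k, Fin (ns ((Fin.last k).succAbove j))) ⊕
              Fin (ns (Fin.last k))) _ F) (Sum.inr x) (Sum.inr y) := hent
        _ = (1 : Matrix (Fin (ns (Fin.last k))) _ F) x y := by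
            simp [Matrix.one_apply, Sum.inr.injEq]
    have husum : ∑ b, u b = 1 := by
      apply Subtype.ext
      have hval : ((∑ b, u b : ↥(tupleEnd X)) :
            Matrix (Fin (ms (Fin.last k))) (Fin (ms (Fin.last k))) F ×
            Matrix (Fin (ns (Fin.last k))) (Fin (ns (Fin.last k))) F)
          = ∑ b, ((u b : ↥(tupleEnd X)) :
            Matrix (Fin (ms (Fin.last k))) (Fin (ms (Fin.last k))) F ×
            Matrix (Fin (ns (Fin.last k))) (Fin (ns (Fin.last k))) F) :=
        map_sum ((tupleEnd X).val) u Finset.univ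
      rw [hval]
      apply Prod.ext
      · rw [Prod.fst_sum]
        simpa using hsum1
      · rw [Prod.snd_sum]
        simpa using hsum2
    -- Step 4: locality gives a unit composite
    have hcardX : 0 < Fintype.card (Fin (ms (Fin.last k))) + Fintype.card (Fin (ns (Fin.last k))) := by
      simpa using (hP (Fin.last k)).1
    haveI := tupleEnd_nontrivial X hcardX
    have hidem := tupleEnd_idem_trivial X (hP (Fin.last k))
    obtain ⟨b₀, _, hb₀unit⟩ := ks_exists_unit_of_sum
      (fun a b ha hb => ks_nonunits_add (F := F) hidem a b ha hb) Finset.univ u husum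
    -- Step 5: extraction of the isomorphism X ≃ Q b₀
    obtain ⟨w1, w2, hwhom, hF1w, hwF1, hF2w, hwF2⟩ :=
      ks_extract X (Q b₀) (hQ b₀) hcardX (f1 b₀) (f2 b₀) (g1 b₀) (g2 b₀) (hf b₀) (hg b₀)
        (u b₀) rfl hb₀unit
    have hXQ : TuplesEquiv X (Q b₀) := by
      refine ⟨f1 b₀, w1, w2, f2 b₀, hF1w, hwF1, hwF2, hF2w, fun i => ?_⟩
      rw [hf b₀ i, Matrix.mul_assoc, hF2w, Matrix.mul_one]
    -- Step 6: permute the Q side so that b₀ comes last, and cancel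
    have hstructQ : ∀ i, (Matrix.blockDiagonal' fun b => Q b i).submatrix
        ⇑(ksSigmaEquiv ms' b₀) ⇑(ksSigmaEquiv ns' b₀) =
        Matrix.fromBlocks
          (Matrix.blockDiagonal' fun b => Q (b₀.succAbove b) i) 0 0 (Q b₀ i) :=
      fun i => ks_blockDiag_submatrix ms' ns' (fun b => Q b i) b₀
    set R2 := R.submatrix ⇑(ksSigmaEquiv ms' b₀) _root_.id with hR2
    set R2' := R'.submatrix _root_.id ⇑(ksSigmaEquiv ms' b₀) with hR2'
    set S2 := S.submatrix _root_.id ⇑(ksSigmaEquiv ns' b₀) with hS2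
    set S2' := S'.submatrix ⇑(ksSigmaEquiv ns' b₀) _root_.id with hS2'
    have hR2R2' : R2 * R2' = 1 := by
      have h0 := Matrix.submatrix_mul_equiv R R' ⇑(ksSigmaEquiv ms' b₀) (Equiv.refl _)
        ⇑(ksSigmaEquiv ms' b₀)
      rw [hRR'] at h0
      simpa [hR2, hR2', Matrix.submatrix_one_equiv] using h0
    have hR2'R2 : R2' * R2 = 1 := by
      have h0 := Matrix.submatrix_mul_equiv R' R _root_.id (ksSigmaEquiv ms' b₀) _root_.id
      rw [hR'R] at h0
      simpa [hR2, hR2'] using h0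
    have hS2S2' : S2 * S2' = 1 := by
      have h0 := Matrix.submatrix_mul_equiv S S' _root_.id (ksSigmaEquiv ns' b₀) _root_.id
      rw [hSS'] at h0
      simpa [hS2, hS2'] using h0
    have hS2'S2 : S2' * S2 = 1 := by
      have h0 := Matrix.submatrix_mul_equiv S' S ⇑(ksSigmaEquiv ns' b₀) (Equiv.refl _)
        ⇑(ksSigmaEquiv ns' b₀)
      rw [hS'S] at h0
      simpa [hS2, hS2', Matrix.submatrix_one_equiv] using h0
    have hRMS2 : ∀ i, R2 * Matrix.fromBlocks
        (Matrix.blockDiagonal' fun j => P ((Fin.last k).succAbove j) i) 0 0 (X i) * S2 =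
        Matrix.fromBlocks
          (Matrix.blockDiagonal' fun b => Q (b₀.succAbove b) i) 0 0 (Q b₀ i) := by
      intro i
      have e1 : R2 * Matrix.fromBlocks
          (Matrix.blockDiagonal' fun j => P ((Fin.last k).succAbove j) i) 0 0 (X i) =
          (R * Matrix.fromBlocks
            (Matrix.blockDiagonal' fun j => P ((Fin.last k).succAbove j) i) 0 0 (X i)).submatrix
            ⇑(ksSigmaEquiv ms' b₀) _root_.id := by
        have h0 := Matrix.submatrix_mul_equiv R (Matrix.fromBlocks
          (Matrix.blockDiagonal' fun j => P ((Fin.last k).succAbove j) i) 0 0 (X i))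
          ⇑(ksSigmaEquiv ms' b₀) (Equiv.refl _) _root_.id
        simpa [hR2] using h0
      have e2 : (R * Matrix.fromBlocks
          (Matrix.blockDiagonal' fun j => P ((Fin.last k).succAbove j) i) 0 0 (X i)).submatrix
          ⇑(ksSigmaEquiv ms' b₀) _root_.id * S2 =
          (R * Matrix.fromBlocks
            (Matrix.blockDiagonal' fun j => P ((Fin.last k).succAbove j) i) 0 0 (X i) * S).submatrix
            ⇑(ksSigmaEquiv ms' b₀) ⇑(ksSigmaEquiv ns' b₀) := by
        have h0 := Matrix.submatrix_mul_equiv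
          (R * Matrix.fromBlocks
            (Matrix.blockDiagonal' fun j => P ((Fin.last k).succAbove j) i) 0 0 (X i)) S
          ⇑(ksSigmaEquiv ms' b₀) (Equiv.refl _) ⇑(ksSigmaEquiv ns' b₀)
        simpa [hS2] using h0
      rw [e1, e2, hRMS i, hstructQ i]
    have hR2c : R2.toBlocks₂₂ = f1 b₀ := by
      ext x y
      rfl
    have hS2'c : S2'.toBlocks₂₂ = f2 b₀ := by
      ext x y
      rfl
    obtain ⟨E, E', U, U', hE1, hE2, hU1, hU2, hEDU⟩ :=
      ks_cancel (fun i => Matrix.blockDiagonal' fun j => P ((Fin.last k).succAbove j) i) X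
        (fun i => Matrix.blockDiagonal' fun b => Q (b₀.succAbove b) i) (Q b₀)
        R2 R2' S2 S2' hR2R2' hR2'R2 hS2S2' hS2'S2 hRMS2 w1 w2
        (by rw [hR2c]; exact hF1w) (by rw [hR2c]; exact hwF1)
        (by rw [hS2'c]; exact hF2w) (by rw [hS2'c]; exact hwF2) hwhom
    have hDADB : TuplesEquiv
        (fun i => Matrix.blockDiagonal' fun j : Fin k => P ((Fin.last k).succAbove j) i)
        (fun i => Matrix.blockDiagonal' fun b : Fin l' => Q (b₀.succAbove b) i) :=
      ⟨E, E', U, U', hE1, hE2, hU1, hU2, hEDU⟩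
    -- Step 7: induction hypothesis and assembly
    obtain ⟨hkl, σ', hσ'⟩ := ih (fun j => ms ((Fin.last k).succAbove j))
      (fun j => ns ((Fin.last k).succAbove j))
      (fun b => ms' (b₀.succAbove b)) (fun b => ns' (b₀.succAbove b))
      (fun j => P ((Fin.last k).succAbove j))
      (fun b => Q (b₀.succAbove b)) (fun j => hP _) (fun b => hQ _) hDADB
    have hkl' : l' = k := hkl.symm
    subst hkl
    refine ⟨rfl, finSuccEquivLast.trans ((σ'.optionCongr).trans (finSuccEquiv' b₀).symm), ?_⟩
    intro j
    refine Fin.lastCases ?_ ?_ j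
    · have hσlast : (finSuccEquivLast.trans ((σ'.optionCongr).trans (finSuccEquiv' b₀).symm))
          (Fin.last _) = b₀ := by simp
      rw [hσlast]
      exact hXQ
    · intro j'
      have hσc : (finSuccEquivLast.trans ((σ'.optionCongr).trans (finSuccEquiv' b₀).symm))
          (Fin.castSucc j') = b₀.succAbove (σ' j') := by simp
      rw [hσc]
      have hres := hσ' j'
      rw [Fin.succAbove_last] at hres
      exact hres
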